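/- Let a : ℝ → ℝ be a C^∞ function with a(s) = 0 for all s ≤ 0, a(s) > 0 for all s > 0, and |a| bounded. For a C¹ vector field V on ℝ³, let V̂ denote its cotangent lift to ℝ⁶ = ℝ³ × ℝ³, V̂(q,p) = (V(q), −(DV(q))ᵀ p). Then the lifted perturbed action is not smoothly linearizable at the origin of ℝ⁶: there is no pair (U, φ) with U an open neighbourhood of 0 in ℝ⁶ and φ : U → ℝ⁶ a C^∞ map with φ(0) = 0 and Dφ(w) a linear isomorphism for every w ∈ U, such that for all w ∈ U: Dφ(w)(X̃̂(w)) = X̂(φ(w)), Dφ(w)(Ỹ̂(w)) = Ŷ(φ(w)), and Dφ(w)(Z̃̂(w)) = Ẑ(φ(w)), where X̃̂, Ỹ̂, Z̃̂ are the cotangent lifts of the perturbed fields X̃, Ỹ, Z̃ and X̂, Ŷ, Ẑ are the cotangent lifts of the linear fields X, Y, Z. -/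

import Mathlib

noncomputable section

/-- The linear vector field `X(x,y,z) = (0,z,y)` on `ℝ³`. -/
def Xf (p : Fin 3 → ℝ) : Fin 3 → ℝ := ![0, p 2, p 1]

/-- The linear vector field `Y(x,y,z) = (z,0,x)` on `ℝ³`. -/
def Yf (p : Fin 3 → ℝ) : Fin 3 → ℝ := ![p 2, 0, p 0]

/-- The linear vector field `Z(x,y,z) = (−y,x,0)` on `ℝ³`. -/
def Zf (p : Fin 3 → ℝ) : Fin 3 → ℝ := ![-p 1, p 0, 0]

/-- The Lie bracket of vector fields: `[V,W](p) = DW(p)(V(p)) − DV(p)(W(p))`. -/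
def lieBr (V W : (Fin 3 → ℝ) → (Fin 3 → ℝ)) (p : Fin 3 → ℝ) : Fin 3 → ℝ :=
  fderiv ℝ W p (V p) - fderiv ℝ V p (W p)

/-- The radial vector field `R(x,y,z) = (x,y,z)`. -/
def Rf (p : Fin 3 → ℝ) : Fin 3 → ℝ := p

/-- The quadratic form `x² + y² − z²`. -/
def Qf (p : Fin 3 → ℝ) : ℝ := (p 0) ^ 2 + (p 1) ^ 2 - (p 2) ^ 2

/-- `A(x,y,z) = a(x²+y²−z²)/(x²+y²)` when `x²+y² ≠ 0`, and `0` when `x²+y² = 0`. -/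
def Afun (a : ℝ → ℝ) (p : Fin 3 → ℝ) : ℝ :=
  if (p 0) ^ 2 + (p 1) ^ 2 = 0 then 0 else a (Qf p) / ((p 0) ^ 2 + (p 1) ^ 2)

/-- `f = x·A`. -/
def ff (a : ℝ → ℝ) (p : Fin 3 → ℝ) : ℝ := p 0 * Afun a p

/-- `g = −y·A`. -/
def gf (a : ℝ → ℝ) (p : Fin 3 → ℝ) : ℝ := -p 1 * Afun a p

/-- The Cairns–Ghys perturbed field `X̃ = X + f·R`. -/
def Xt (a : ℝ → ℝ) (p : Fin 3 → ℝ) : Fin 3 → ℝ := Xf p + ff a p • Rf p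

/-- The Cairns–Ghys perturbed field `Ỹ = Y + g·R`. -/
def Yt (a : ℝ → ℝ) (p : Fin 3 → ℝ) : Fin 3 → ℝ := Yf p + gf a p • Rf p

/-- The Cairns–Ghys perturbed field `Z̃ = Z`. -/
def Zt (p : Fin 3 → ℝ) : Fin 3 → ℝ := Zf p

/-- `ℝ⁶ = T*ℝ³` with base coordinates `q` and fiber coordinates `p`. -/
abbrev E6 : Type := (Fin 3 → ℝ) × (Fin 3 → ℝ)

/-- The cotangent lift of a vector field `V` on `ℝ³`: `V̂(q,p) = (V(q), −(DV(q))ᵀ p)`. -/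
def cotLift (V : (Fin 3 → ℝ) → (Fin 3 → ℝ)) (w : E6) : E6 :=
  (V w.1, fun i => -∑ j, fderiv ℝ V w.1 (Pi.single i 1) j * w.2 j)

/-! ### Auxiliary machinery for the proof -/

section CGAux

/-- `X` as a continuous linear map. -/
def Xclm : (Fin 3 → ℝ) →L[ℝ] (Fin 3 → ℝ) :=
  ContinuousLinearMap.pi ![0, ContinuousLinearMap.proj 2, ContinuousLinearMap.proj 1]

/-- `Y` as a continuous linear map. -/
def Yclm : (Fin 3 → ℝ) →L[ℝ] (Fin 3 → ℝ) :=
  ContinuousLinearMap.pi ![ContinuousLinearMap.proj 2, 0, ContinuousLinearMap.proj 0]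

/-- `Z` as a continuous linear map. -/
def Zclm : (Fin 3 → ℝ) →L[ℝ] (Fin 3 → ℝ) :=
  ContinuousLinearMap.pi ![-ContinuousLinearMap.proj 1, ContinuousLinearMap.proj 0, 0]

lemma Xf_eq : Xf = ⇑Xclm := by funext p; funext i; fin_cases i <;> simp [Xf, Xclm]
lemma Yf_eq : Yf = ⇑Yclm := by funext p; funext i; fin_cases i <;> simp [Yf, Yclm]
lemma Zf_eq : Zf = ⇑Zclm := by funext p; funext i; fin_cases i <;> simp [Zf, Zclm]

lemma cotLift_Xf (w : E6) :
    cotLift Xf w = (![0, w.1 2, w.1 1], ![0, -w.2 2, -w.2 1]) := by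
  refine Prod.ext rfl ?_
  have h : fderiv ℝ Xf w.1 = Xclm := by rw [Xf_eq]; exact Xclm.fderiv
  show (fun i => -∑ j, fderiv ℝ Xf w.1 (Pi.single i 1) j * w.2 j) = _
  rw [h]; funext i
  fin_cases i <;> simp [Xclm, Fin.sum_univ_three, Pi.single_apply]

lemma cotLift_Yf (w : E6) :
    cotLift Yf w = (![w.1 2, 0, w.1 0], ![-w.2 2, 0, -w.2 0]) := by
  refine Prod.ext rfl ?_
  have h : fderiv ℝ Yf w.1 = Yclm := by rw [Yf_eq]; exact Yclm.fderiv
  show (fun i => -∑ j, fderiv ℝ Yf w.1 (Pi.single i 1) j * w.2 j) = _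
  rw [h]; funext i
  fin_cases i <;> simp [Yclm, Fin.sum_univ_three, Pi.single_apply]

lemma cotLift_Zf (w : E6) :
    cotLift Zf w = (![-w.1 1, w.1 0, 0], ![-w.2 1, w.2 0, 0]) := by
  refine Prod.ext rfl ?_
  have h : fderiv ℝ Zf w.1 = Zclm := by rw [Zf_eq]; exact Zclm.fderiv
  show (fun i => -∑ j, fderiv ℝ Zf w.1 (Pi.single i 1) j * w.2 j) = _
  rw [h]; funext i
  fin_cases i <;> simp [Zclm, Fin.sum_univ_three, Pi.single_apply]

/-- Coordinate functionals on `E6`. -/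
def qc (i : Fin 3) : E6 →L[ℝ] ℝ :=
  (ContinuousLinearMap.proj i).comp (ContinuousLinearMap.fst ℝ (Fin 3 → ℝ) (Fin 3 → ℝ))
def pc (i : Fin 3) : E6 →L[ℝ] ℝ :=
  (ContinuousLinearMap.proj i).comp (ContinuousLinearMap.snd ℝ (Fin 3 → ℝ) (Fin 3 → ℝ))

@[simp] lemma qc_apply (i : Fin 3) (w : E6) : qc i w = w.1 i := rfl
@[simp] lemma pc_apply (i : Fin 3) (w : E6) : pc i w = w.2 i := rfl

/-- The three basic invariants of the lifted linear action. -/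
def F1 : E6 → ℝ := fun w => w.1 0 * w.1 0 + w.1 1 * w.1 1 - w.1 2 * w.1 2
def F2 : E6 → ℝ := fun w => w.2 0 * w.2 0 + w.2 1 * w.2 1 - w.2 2 * w.2 2
def F3 : E6 → ℝ := fun w => w.2 0 * w.1 0 + w.2 1 * w.1 1 + w.2 2 * w.1 2

def DF1 (v : E6) : E6 →L[ℝ] ℝ :=
  (v.1 0 • qc 0 + v.1 0 • qc 0 + (v.1 1 • qc 1 + v.1 1 • qc 1)) - (v.1 2 • qc 2 + v.1 2 • qc 2)
def DF2 (v : E6) : E6 →L[ℝ] ℝ :=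
  (v.2 0 • pc 0 + v.2 0 • pc 0 + (v.2 1 • pc 1 + v.2 1 • pc 1)) - (v.2 2 • pc 2 + v.2 2 • pc 2)
def DF3 (v : E6) : E6 →L[ℝ] ℝ :=
  (v.2 0 • qc 0 + v.1 0 • pc 0 + (v.2 1 • qc 1 + v.1 1 • pc 1)) + (v.2 2 • qc 2 + v.1 2 • pc 2)

lemma hasFDerivAt_F1 (v : E6) : HasFDerivAt F1 (DF1 v) v :=
  (((qc 0).hasFDerivAt.mul (qc 0).hasFDerivAt).add
    ((qc 1).hasFDerivAt.mul (qc 1).hasFDerivAt)).sub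
    ((qc 2).hasFDerivAt.mul (qc 2).hasFDerivAt)

lemma hasFDerivAt_F2 (v : E6) : HasFDerivAt F2 (DF2 v) v :=
  (((pc 0).hasFDerivAt.mul (pc 0).hasFDerivAt).add
    ((pc 1).hasFDerivAt.mul (pc 1).hasFDerivAt)).sub
    ((pc 2).hasFDerivAt.mul (pc 2).hasFDerivAt)

lemma hasFDerivAt_F3 (v : E6) : HasFDerivAt F3 (DF3 v) v :=
  (((pc 0).hasFDerivAt.mul (qc 0).hasFDerivAt).add
    ((pc 1).hasFDerivAt.mul (qc 1).hasFDerivAt)).add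
    ((pc 2).hasFDerivAt.mul (qc 2).hasFDerivAt)

lemma contF1 : Continuous F1 := by unfold F1; fun_prop
lemma contF2 : Continuous F2 := by unfold F2; fun_prop
lemma contF3 : Continuous F3 := by unfold F3; fun_prop

lemma DF1_X (v : E6) : DF1 v (cotLift Xf v) = 0 := by
  rw [cotLift_Xf]; simp [DF1]; ring
lemma DF2_X (v : E6) : DF2 v (cotLift Xf v) = 0 := by
  rw [cotLift_Xf]; simp [DF2]; ring
lemma DF3_X (v : E6) : DF3 v (cotLift Xf v) = 0 := by
  rw [cotLift_Xf]; simp [DF3]; ring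

lemma cotLift_pzero (V : (Fin 3 → ℝ) → Fin 3 → ℝ) (q : Fin 3 → ℝ) :
    cotLift V (q, 0) = (V q, 0) := by
  refine Prod.ext rfl ?_
  funext i
  simp [cotLift]

lemma Afun_ray (a : ℝ → ℝ) {s : ℝ} (hs : s ≠ 0) : Afun a ![s, 0, 0] = a (s ^ 2) / s ^ 2 := by
  have h : (![s, 0, 0] : Fin 3 → ℝ) 0 ^ 2 + (![s, 0, 0] : Fin 3 → ℝ) 1 ^ 2 = s ^ 2 := by
    norm_num
  have hq : Qf ![s, 0, 0] = s ^ 2 := by simp [Qf]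
  rw [Afun, h, hq, if_neg (pow_ne_zero 2 hs)]

lemma Xt_ray (a : ℝ → ℝ) {s : ℝ} (hs : s ≠ 0) : Xt a ![s, 0, 0] = ![a (s ^ 2), 0, 0] := by
  funext i
  fin_cases i <;> simp [Xt, Xf, ff, Rf, Afun_ray a hs] <;> field_simp <;> ring

lemma Yt_ray (a : ℝ → ℝ) (s : ℝ) : Yt a ![s, 0, 0] = ![0, 0, s] := by
  funext i
  fin_cases i <;> simp [Yt, Yf, gf, Rf]

lemma Zt_ray (s : ℝ) : Zt ![s, 0, 0] = ![0, s, 0] := by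
  funext i
  fin_cases i <;> simp [Zt, Zf]

/-- On the common zero set of the three invariants, the lifted linear fields are
linearly dependent. -/
lemma dep_core (q p : Fin 3 → ℝ)
    (h1 : q 0 * q 0 + q 1 * q 1 - q 2 * q 2 = 0)
    (h3 : p 0 * q 0 + p 1 * q 1 + p 2 * q 2 = 0)
    (h2 : p 0 * p 0 + p 1 * p 1 - p 2 * p 2 = 0) :
    ∃ c : Fin 3 → ℝ, c ≠ 0 ∧
      c 0 • ((![0, q 2, q 1], ![0, -p 2, -p 1]) : E6)
        + c 1 • ((![q 2, 0, q 0], ![-p 2, 0, -p 0]) : E6)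
        + c 2 • ((![-q 1, q 0, 0], ![-p 1, p 0, 0]) : E6) = 0 := by
  by_cases hq : q = 0
  · by_cases hp : p = 0
    · refine ⟨![1, 0, 0], ?_, ?_⟩
      · intro h
        have := congrFun h 0
        norm_num at this
      · subst hq hp
        refine Prod.ext ?_ ?_ <;> · funext i; fin_cases i <;> simp
    · refine ⟨![p 0, -p 1, p 2], ?_, ?_⟩
      · intro h
        apply hp
        funext i
        fin_cases i
        · have := congrFun h 0; simpa using this
        · have h' := congrFun h 1
          simp at h'
          simpa using h'
        · have := congrFun h 2; simpa using this
      · subst hq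
        refine Prod.ext ?_ ?_ <;> · funext i; fin_cases i <;> (simp; try ring)
  · have hq2 : q 2 ≠ 0 := by
      intro h2z
      apply hq
      have e0 : q 0 * q 0 = 0 := by nlinarith [mul_self_nonneg (q 0), mul_self_nonneg (q 1)]
      have e1 : q 1 * q 1 = 0 := by nlinarith [mul_self_nonneg (q 0), mul_self_nonneg (q 1)]
      funext i
      fin_cases i
      · simpa using mul_self_eq_zero.mp e0
      · simpa using mul_self_eq_zero.mp e1
      · simpa using h2z
    have key2 : (p 0 * q 1 - p 1 * q 0) ^ 2 = 0 := by
      linear_combination (q 0 * q 0 + q 1 * q 1) * h2 + (p 2 * p 2) * h1 +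
        (2 * p 2 * q 2 - (p 0 * q 0 + p 1 * q 1 + p 2 * q 2)) * h3
    have key : p 0 * q 1 = p 1 * q 0 := by
      have := pow_eq_zero_iff (n := 2) (by norm_num) |>.mp key2
      linarith [sub_eq_zero.mp this]
    have e2 : p 0 * q 2 = -(p 2 * q 0) := by
      apply mul_right_cancel₀ hq2
      linear_combination q 0 * h3 + q 1 * key - p 0 * h1
    have e1 : p 1 * q 2 = -(p 2 * q 1) := by
      apply mul_right_cancel₀ hq2
      linear_combination q 1 * h3 - q 0 * key - p 1 * h1
    refine ⟨![q 0, -q 1, -q 2], ?_, ?_⟩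
    · intro h
      apply hq
      funext i
      fin_cases i
      · have := congrFun h 0; simpa using this
      · have h' := congrFun h 1; simp at h'; simpa using h'
      · have h' := congrFun h 2; simp at h'; simpa using h'
    · refine Prod.ext ?_ ?_ <;>
        · funext i
          fin_cases i <;> (simp; try linarith)

lemma dep (v : E6) (h1 : F1 v = 0) (h2 : F2 v = 0) (h3 : F3 v = 0) :
    ∃ c : Fin 3 → ℝ, c ≠ 0 ∧
      c 0 • cotLift Xf v + c 1 • cotLift Yf v + c 2 • cotLift Zf v = 0 := by
  rw [cotLift_Xf, cotLift_Yf, cotLift_Zf]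
  exact dep_core v.1 v.2 h1 h3 h2

end CGAux

/-- **The Hamiltonian counterexample.** For `a` smooth, vanishing on `(−∞,0]`, positive
on `(0,∞)` and bounded, the cotangent lifts of the Cairns–Ghys perturbed fields
`X̃, Ỹ, Z̃` form a Hamiltonian `𝔰𝔩(2,ℝ)`-action on `ℝ⁶` that is not smoothly
linearizable at the origin: no local `C^∞` diffeomorphism of a neighbourhood of
`0 ∈ ℝ⁶`, fixing `0`, conjugates them to the cotangent lifts of the linear fields
`X, Y, Z`. -/
theorem lifted_cairnsGhys_not_linearizable
    (a : ℝ → ℝ) (ha : ContDiff ℝ (⊤ : ℕ∞) a)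
    (ha0 : ∀ s : ℝ, s ≤ 0 → a s = 0) (hapos : ∀ s : ℝ, 0 < s → 0 < a s)
    (K : ℝ) (haK : ∀ s : ℝ, |a s| ≤ K) :
    ¬ ∃ (U : Set E6) (φ : E6 → E6),
        IsOpen U ∧ (0 : E6) ∈ U ∧
        ContDiffOn ℝ (⊤ : ℕ∞) φ U ∧ φ 0 = 0 ∧
        (∀ w ∈ U, Function.Bijective (fderiv ℝ φ w)) ∧
        (∀ w ∈ U,
          fderiv ℝ φ w (cotLift (Xt a) w) = cotLift Xf (φ w) ∧
          fderiv ℝ φ w (cotLift (Yt a) w) = cotLift Yf (φ w) ∧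
          fderiv ℝ φ w (cotLift Zt w) = cotLift Zf (φ w)) := by
  rintro ⟨U, φ, hUo, hU0, hφC, hφ0, hbij, hconj⟩
  obtain ⟨ε, hε, hball⟩ := Metric.isOpen_iff.mp hUo 0 hU0
  set w₁ : E6 := (![1, 0, 0], (0 : Fin 3 → ℝ)) with hw₁def
  have hsmul : ∀ s : ℝ, s • w₁ = ((![s, 0, 0] : Fin 3 → ℝ), (0 : Fin 3 → ℝ)) := by
    intro s
    rw [hw₁def, Prod.smul_mk, smul_zero]
    congr 1
    funext i; fin_cases i <;> simp
  have hmem : ∀ s : ℝ, s ∈ Set.Ioo (0 : ℝ) ε → s • w₁ ∈ U := by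
    intro s hs
    apply hball
    rw [Metric.mem_ball, dist_zero_right, hsmul, Prod.norm_def]
    apply max_lt
    · have hle : ‖(![s, 0, 0] : Fin 3 → ℝ)‖ ≤ s := by
        rw [pi_norm_le_iff_of_nonneg (le_of_lt hs.1)]
        intro i
        fin_cases i <;> simp <;> linarith [abs_of_pos hs.1, hs.1]
      linarith [hs.2]
    · simpa using hε
  have hXtlift : ∀ s : ℝ, s ∈ Set.Ioo (0 : ℝ) ε →
      cotLift (Xt a) (s • w₁) = (![a (s ^ 2), 0, 0], 0) := by
    intro s hs
    rw [hsmul, cotLift_pzero, Xt_ray a (ne_of_gt hs.1)]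
  have hαpos : ∀ s : ℝ, 0 < s → 0 < a (s ^ 2) := fun s hs => hapos _ (by positivity)
  -- the pulled-back invariants vanish along the ray
  have main : ∀ (F : E6 → ℝ) (DF : E6 → (E6 →L[ℝ] ℝ)),
      (∀ v, HasFDerivAt F (DF v) v) → (∀ v, DF v (cotLift Xf v) = 0) → F 0 = 0 →
      Continuous F → F (φ ((ε / 2) • w₁)) = 0 := by
    intro F DF hdF hinv hF0 hFc
    have hderiv : ∀ s ∈ Set.Ioo (0 : ℝ) ε,
        HasDerivAt (fun t : ℝ => F (φ (t • w₁))) 0 s := by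
      intro s hs
      have hsU := hmem s hs
      have hφd : HasFDerivAt φ (fderiv ℝ φ (s • w₁)) (s • w₁) :=
        ((hφC.differentiableOn (by simp)).differentiableAt
          (hUo.mem_nhds hsU)).hasFDerivAt
      have hγ : HasDerivAt (fun t : ℝ => t • w₁) w₁ s := by
        simpa using (hasDerivAt_id s).smul_const w₁
      have hc1 := (hconj _ hsU).1
      have hα : a (s ^ 2) ≠ 0 := ne_of_gt (hαpos s hs.1)
      have hx : w₁ = (a (s ^ 2))⁻¹ • cotLift (Xt a) (s • w₁) := by
        rw [hXtlift s hs, hw₁def]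
        refine Prod.ext ?_ ?_
        · show (![1, 0, 0] : Fin 3 → ℝ) = (a (s ^ 2))⁻¹ • ![a (s ^ 2), 0, 0]
          funext i
          fin_cases i <;> simp [inv_mul_cancel₀ hα]
        · show (0 : Fin 3 → ℝ) = (a (s ^ 2))⁻¹ • (0 : Fin 3 → ℝ)
          simp
      set vφ := φ (s • w₁) with hvφdef
      set D := fderiv ℝ φ (s • w₁) with hDdef
      have hcomp := ((hdF vφ).comp (s • w₁) hφd).comp_hasDerivAt s hγ
      have hval : ((DF vφ).comp D) w₁ = 0 := by
        rw [ContinuousLinearMap.comp_apply, hx, map_smul, hc1, map_smul, hinv, smul_zero]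
      rw [hval] at hcomp
      simpa [Function.comp_def] using hcomp
    have hhalf : ε / 2 ∈ Set.Ioo (0 : ℝ) ε := ⟨by linarith, by linarith⟩
    have hconst : ∀ s ∈ Set.Ioo (0 : ℝ) ε,
        F (φ (s • w₁)) = F (φ ((ε / 2) • w₁)) := by
      intro s hs
      have hb := Convex.norm_image_sub_le_of_norm_hasDerivWithin_le
        (f := fun t : ℝ => F (φ (t • w₁))) (f' := fun _ => (0 : ℝ)) (C := 0)
        (s := Set.Ioo (0 : ℝ) ε)
        (fun x hx => (hderiv x hx).hasDerivWithinAt) (fun x _ => by simp)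
        (convex_Ioo _ _) hhalf hs
      have hb' : ‖F (φ (s • w₁)) - F (φ ((ε / 2) • w₁))‖ ≤ 0 := by simpa using hb
      have := norm_le_zero_iff.mp hb'
      exact sub_eq_zero.mp this
    have hcont : ContinuousAt (fun s : ℝ => F (φ (s • w₁))) 0 := by
      have h1 : ContinuousAt (fun s : ℝ => s • w₁) 0 := by fun_prop
      have h2 : ContinuousAt φ ((fun s : ℝ => s • w₁) 0) := by
        simp only [zero_smul]
        exact hφC.continuousOn.continuousAt (hUo.mem_nhds hU0)
      have h3 : ContinuousAt (fun s : ℝ => φ (s • w₁)) 0 :=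
        ContinuousAt.comp (g := φ) (f := fun s : ℝ => s • w₁) (x := (0 : ℝ)) h2 h1
      have h4 : ContinuousAt (fun s : ℝ => F (φ (s • w₁))) 0 :=
        ContinuousAt.comp (g := F) (f := fun s : ℝ => φ (s • w₁)) (x := (0 : ℝ))
          hFc.continuousAt h3
      exact h4
    have hu0 : F (φ ((0 : ℝ) • w₁)) = 0 := by
      rw [zero_smul, hφ0, hF0]
    have hlim1 : Filter.Tendsto (fun s : ℝ => F (φ (s • w₁)))
        (nhdsWithin (0 : ℝ) (Set.Ioi (0 : ℝ))) (nhds (F (φ ((0 : ℝ) • w₁)))) :=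
      hcont.continuousWithinAt.tendsto
    rw [hu0] at hlim1
    have hlim2 : Filter.Tendsto (fun s : ℝ => F (φ (s • w₁)))
        (nhdsWithin 0 (Set.Ioi (0 : ℝ))) (nhds (F (φ ((ε / 2) • w₁)))) := by
      refine Filter.Tendsto.congr' ?_ tendsto_const_nhds
      filter_upwards [Ioo_mem_nhdsGT_of_mem (Set.mem_Ico.mpr ⟨le_refl _, hε⟩)] with s hs
      exact (hconst s hs).symm
    exact tendsto_nhds_unique hlim2 hlim1
  -- apply to the three invariants
  set w₀ : E6 := (ε / 2) • w₁ with hw₀def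
  have hε2 : (0 : ℝ) < ε / 2 := by linarith
  have hw₀U : w₀ ∈ U := hmem _ ⟨hε2, by linarith⟩
  have hv1 : F1 (φ w₀) = 0 := main F1 DF1 hasFDerivAt_F1 DF1_X (by simp [F1]) contF1
  have hv2 : F2 (φ w₀) = 0 := main F2 DF2 hasFDerivAt_F2 DF2_X (by simp [F2]) contF2
  have hv3 : F3 (φ w₀) = 0 := main F3 DF3 hasFDerivAt_F3 DF3_X (by simp [F3]) contF3
  obtain ⟨c, hc0, hcsum⟩ := dep (φ w₀) hv1 hv2 hv3
  have himg : fderiv ℝ φ w₀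
      (c 0 • cotLift (Xt a) w₀ + c 1 • cotLift (Yt a) w₀ + c 2 • cotLift Zt w₀) = 0 := by
    rw [map_add, map_add, map_smul, map_smul, map_smul, (hconj _ hw₀U).1,
      (hconj _ hw₀U).2.1, (hconj _ hw₀U).2.2]
    exact hcsum
  have hzero : c 0 • cotLift (Xt a) w₀ + c 1 • cotLift (Yt a) w₀ + c 2 • cotLift Zt w₀ = 0 := by
    apply (hbij w₀ hw₀U).1
    rw [himg, map_zero]
  have hw₀eq : w₀ = ((![ε / 2, 0, 0] : Fin 3 → ℝ), (0 : Fin 3 → ℝ)) := by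
    rw [hw₀def, hsmul]
  have hb : c 0 • (![a ((ε / 2) ^ 2), 0, 0] : Fin 3 → ℝ)
      + c 1 • (![0, 0, ε / 2] : Fin 3 → ℝ) + c 2 • (![0, ε / 2, 0] : Fin 3 → ℝ) = 0 := by
    have hfst := congrArg Prod.fst hzero
    rw [hw₀eq] at hfst
    simpa [cotLift_pzero, Xt_ray a (ne_of_gt hε2), Yt_ray, Zt_ray] using hfst
  have hα : a ((ε / 2) ^ 2) ≠ 0 := ne_of_gt (hapos _ (by positivity))
  have h0 := congrFun hb 0
  have h1c := congrFun hb 1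
  have h2c := congrFun hb 2
  simp at h0 h1c h2c
  apply hc0
  funext i
  fin_cases i
  · simpa using h0.resolve_right hα
  · simpa using h2c.resolve_right (ne_of_gt hε)
  · simpa using h1c.resolve_right (ne_of_gt hε)
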